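/- Let F̃ be the CDF of an absolutely continuous probability measure on ℝ with density f̃, and let F(· | x̂) = Σ_{j=1}^L w_j H(· − x̂_j) be the empirical CDF of a Dirac mixture with distinct locations. Then the partial derivative of D(x̂) = ∫_ℝ (F̃(t) − F(t | x̂))² dt with respect to x̂_i equals 2 w_i (F̃(x̂_i) − F(x̂_i | x̂)), where F(x̂_i | x̂) uses the convention H(0) = 1/2. -/

import Mathlib

open MeasureTheory Set ENNReal

/-- The Heaviside function with the convention `H(0) = 1/2`. -/
noncomputable def heaviside (t : ℝ) : ℝ :=
  if t < 0 then 0 else if t = 0 then 1 / 2 else 1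

lemma heaviside_of_neg {t : ℝ} (h : t < 0) : heaviside t = 0 := by
  simp [heaviside, h]

lemma heaviside_of_pos {t : ℝ} (h : 0 < t) : heaviside t = 1 := by
  simp [heaviside, not_lt.mpr h.le, h.ne']

lemma heaviside_zero : heaviside 0 = 1 / 2 := by simp [heaviside]

lemma heaviside_nonneg (t : ℝ) : 0 ≤ heaviside t := by
  unfold heaviside; split <;> norm_num; split <;> norm_num

lemma heaviside_le_one (t : ℝ) : heaviside t ≤ 1 := by
  unfold heaviside; split <;> norm_num; split <;> norm_num

lemma measurable_heaviside : Measurable heaviside := by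
  unfold heaviside
  refine Measurable.ite (measurableSet_lt measurable_id measurable_const) measurable_const ?_
  exact Measurable.ite (measurableSet_eq_fun measurable_id measurable_const) measurable_const
    measurable_const

lemma integrableOn_cdf_left_tail (f : ℝ → ℝ) (hmeas : Measurable f) (h0 : ∀ s, 0 ≤ f s)
    (hint : Integrable f) (hmom : Integrable (fun s => |s| * f s)) (m : ℝ) :
    IntegrableOn (fun t => ∫ s in Iic t, f s) (Iio m) := by
  have hmono : Monotone (fun t => ∫ s in Iic t, f s) := by
    intro a b hab
    exact setIntegral_mono_set hint.integrableOn (ae_of_all _ h0)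
      (HasSubset.Subset.eventuallyLE (Iic_subset_Iic.mpr hab))
  constructor
  · exact (hmono.measurable).aestronglyMeasurable
  · rw [hasFiniteIntegral_iff_ofReal (ae_of_all _ fun t =>
      setIntegral_nonneg measurableSet_Iic fun s _ => h0 s)]
    set g : ℝ → ℝ≥0∞ := fun s => ENNReal.ofReal (f s) with hg
    have key : ∀ t : ℝ, ENNReal.ofReal (∫ s in Iic t, f s) = ∫⁻ s, (Iic t).indicator g s := by
      intro t
      rw [ofReal_integral_eq_lintegral_ofReal hint.integrableOn (ae_of_all _ h0),
        lintegral_indicator measurableSet_Iic]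
    calc ∫⁻ t in Iio m, ENNReal.ofReal (∫ s in Iic t, f s)
        = ∫⁻ t in Iio m, ∫⁻ s, (fun t s => if s ≤ t then g s else 0) t s := by
          refine lintegral_congr fun t => ?_
          rw [key t]
          refine lintegral_congr fun s => ?_
          simp [Set.indicator_apply, Set.mem_Iic]
      _ = ∫⁻ s, ∫⁻ t in Iio m, (fun t s => if s ≤ t then g s else 0) t s := by
          refine lintegral_lintegral_swap ?_
          refine Measurable.aemeasurable ?_
          refine Measurable.ite ?_ ?_ measurable_const
          · exact measurableSet_le measurable_snd measurable_fst
          · exact (hmeas.comp measurable_snd).ennreal_ofReal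
      _ = ∫⁻ s, g s * volume (Ici s ∩ Iio m) := by
          refine lintegral_congr fun s => ?_
          have : (fun t => if s ≤ t then g s else 0) = (Ici s).indicator (fun _ => g s) := by
            funext t; simp [Set.indicator_apply, Set.mem_Ici]
          rw [this, lintegral_indicator measurableSet_Ici, Measure.restrict_restrict
            measurableSet_Ici, setLIntegral_const]
      _ ≤ ∫⁻ s, ENNReal.ofReal ((|m| + |s|) * f s) := by
          refine lintegral_mono fun s => ?_
          rw [Ici_inter_Iio, Real.volume_Ico]
          calc g s * ENNReal.ofReal (m - s) ≤ g s * ENNReal.ofReal (|m| + |s|) := by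
                refine mul_le_mul_right (ENNReal.ofReal_le_ofReal ?_) _
                have h1 : m ≤ |m| := le_abs_self m
                have h2 : -s ≤ |s| := neg_le_abs s
                linarith
            _ = ENNReal.ofReal ((|m| + |s|) * f s) := by
                rw [hg, ← ENNReal.ofReal_mul (h0 s), mul_comm]
      _ < ⊤ := by
          have : Integrable (fun s => (|m| + |s|) * f s) := by
            have h1 : Integrable (fun s => |m| * f s) := hint.const_mul _
            have := h1.add hmom
            refine this.congr (ae_of_all _ fun s => ?_)
            simp only [Pi.add_apply]; ring
          exact this.lintegral_lt_top

lemma integrableOn_cdf_right_tail (f : ℝ → ℝ) (hmeas : Measurable f) (h0 : ∀ s, 0 ≤ f s)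
    (hint : Integrable f) (hmom : Integrable (fun s => |s| * f s)) (m : ℝ) :
    IntegrableOn (fun t => ∫ s in Ioi t, f s) (Ioi m) := by
  have hmono : Antitone (fun t => ∫ s in Ioi t, f s) := by
    intro a b hab
    exact setIntegral_mono_set hint.integrableOn (ae_of_all _ h0)
      (HasSubset.Subset.eventuallyLE (Ioi_subset_Ioi hab))
  constructor
  · exact (hmono.measurable).aestronglyMeasurable
  · rw [hasFiniteIntegral_iff_ofReal (ae_of_all _ fun t =>
      setIntegral_nonneg measurableSet_Ioi fun s _ => h0 s)]
    set g : ℝ → ℝ≥0∞ := fun s => ENNReal.ofReal (f s) with hg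
    have key : ∀ t : ℝ, ENNReal.ofReal (∫ s in Ioi t, f s) = ∫⁻ s, (Ioi t).indicator g s := by
      intro t
      rw [ofReal_integral_eq_lintegral_ofReal hint.integrableOn (ae_of_all _ h0),
        lintegral_indicator measurableSet_Ioi]
    calc ∫⁻ t in Ioi m, ENNReal.ofReal (∫ s in Ioi t, f s)
        = ∫⁻ t in Ioi m, ∫⁻ s, (fun t s => if t < s then g s else 0) t s := by
          refine lintegral_congr fun t => ?_
          rw [key t]
          refine lintegral_congr fun s => ?_
          simp [Set.indicator_apply, Set.mem_Ioi]
      _ = ∫⁻ s, ∫⁻ t in Ioi m, (fun t s => if t < s then g s else 0) t s := by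
          refine lintegral_lintegral_swap ?_
          refine Measurable.aemeasurable ?_
          refine Measurable.ite ?_ ?_ measurable_const
          · exact measurableSet_lt measurable_fst measurable_snd
          · exact (hmeas.comp measurable_snd).ennreal_ofReal
      _ = ∫⁻ s, g s * volume (Iio s ∩ Ioi m) := by
          refine lintegral_congr fun s => ?_
          have : (fun t => if t < s then g s else 0) = (Iio s).indicator (fun _ => g s) := by
            funext t; simp [Set.indicator_apply, Set.mem_Iio]
          rw [this, lintegral_indicator measurableSet_Iio, Measure.restrict_restrict
            measurableSet_Iio, setLIntegral_const]
      _ ≤ ∫⁻ s, ENNReal.ofReal ((|m| + |s|) * f s) := by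
          refine lintegral_mono fun s => ?_
          rw [Iio_inter_Ioi, Real.volume_Ioo]
          calc g s * ENNReal.ofReal (s - m) ≤ g s * ENNReal.ofReal (|m| + |s|) := by
                refine mul_le_mul_right (ENNReal.ofReal_le_ofReal ?_) _
                have h1 : -m ≤ |m| := neg_le_abs m
                have h2 : s ≤ |s| := le_abs_self s
                linarith
            _ = ENNReal.ofReal ((|m| + |s|) * f s) := by
                rw [hg, ← ENNReal.ofReal_mul (h0 s), mul_comm]
      _ < ⊤ := by
          have : Integrable (fun s => (|m| + |s|) * f s) := by
            have h1 : Integrable (fun s => |m| * f s) := hint.const_mul _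
            have := h1.add hmom
            refine this.congr (ae_of_all _ fun s => ?_)
            simp only [Pi.add_apply]; ring
          exact this.lintegral_lt_top


/-- For a continuous probability density `f̃` with CDF `F̃` (and finite first
moment so that `D` is finite) and the Dirac mixture CDF
`F(t|xhat) = ∑ⱼ wⱼ H(t − xhatⱼ)` at distinct sorted locations, the partial
derivative of `D(xhat) = ∫ (F̃(t) − F(t|xhat))² dt` w.r.t. `xhatᵢ` equals
`2 wᵢ (F̃(xhatᵢ) − F(xhatᵢ|xhat))`. -/
theorem deriv_of_cvm_distance
    (L : ℕ) (w : Fin L → ℝ) (hw : ∀ i, 0 < w i) (hwsum : ∑ i, w i = 1)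
    (xhat : Fin L → ℝ) (hx : StrictMono xhat)
    (ftil : ℝ → ℝ) (hfc : Continuous ftil) (hf0 : ∀ t, 0 ≤ ftil t)
    (hfint : ∫ t, ftil t = 1) (hfmom : Integrable (fun t => |t| * ftil t))
    (Ftil : ℝ → ℝ) (hFtil : ∀ t, Ftil t = ∫ s in Set.Iic t, ftil s)
    (F : ℝ → (Fin L → ℝ) → ℝ)
    (hF : ∀ t x, F t x = ∑ j, w j * heaviside (t - x j))
    (D : (Fin L → ℝ) → ℝ)
    (hD : ∀ x, D x = ∫ t, (Ftil t - F t x) ^ 2)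
    (i : Fin L) :
    HasDerivAt (fun y => D (Function.update xhat i y))
      (2 * w i * (Ftil (xhat i) - F (xhat i) xhat)) (xhat i) := by
  classical
  set xi := xhat i with hxi
  -- basic facts
  have hfi : Integrable ftil := by
    by_contra h
    rw [integral_undef h] at hfint; norm_num at hfint
  have hFc : Continuous Ftil := by
    have h1 : ∀ t, Ftil t = Ftil 0 + ∫ s in (0:ℝ)..t, ftil s := by
      intro t
      rw [hFtil t, hFtil 0,
        ← intervalIntegral.integral_Iic_sub_Iic hfi.integrableOn hfi.integrableOn]
      ring
    rw [funext h1]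
    exact continuous_const.add (intervalIntegral.continuous_primitive
      (fun a b => hfi.intervalIntegrable) 0)
  have hF0 : ∀ t, 0 ≤ Ftil t := fun t => by
    rw [hFtil]; exact setIntegral_nonneg measurableSet_Iic fun s _ => hf0 s
  have hF1 : ∀ t, Ftil t ≤ 1 := fun t => by
    rw [hFtil, ← hfint]; exact setIntegral_le_integral hfi (ae_of_all _ hf0)
  have hFm : Measurable fun t => F t xhat := by
    have : (fun t => F t xhat) = fun t => ∑ j, w j * heaviside (t - xhat j) := by
      funext t; exact hF t xhat
    rw [this]
    exact Finset.measurable_sum _ fun j _ =>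
      ((measurable_heaviside.comp (measurable_id.sub_const _)).const_mul _)
  have hFb0 : ∀ t (x : Fin L → ℝ), 0 ≤ F t x := by
    intro t x; rw [hF]
    exact Finset.sum_nonneg fun j _ => mul_nonneg (hw j).le (heaviside_nonneg _)
  have hFb1 : ∀ t (x : Fin L → ℝ), F t x ≤ 1 := by
    intro t x; rw [hF, ← hwsum]
    exact Finset.sum_le_sum fun j _ => by
      nth_rewrite 2 [← mul_one (w j)]
      exact mul_le_mul_of_nonneg_left (heaviside_le_one _) (hw j).le
  -- integrability of the base integrand
  have hL : 0 < L := i.pos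
  set m : ℝ := xhat ⟨0, hL⟩ with hm
  set Mx : ℝ := xhat ⟨L - 1, Nat.sub_lt hL one_pos⟩ with hMx
  have hmle : ∀ j, m ≤ xhat j := fun j => hx.monotone (by simp [Fin.le_def])
  have hMge : ∀ j, xhat j ≤ Mx := fun j =>
    hx.monotone (by simp [Fin.le_def]; exact Nat.le_sub_one_of_lt j.isLt)
  have hGint : Integrable (fun t => Ftil t - F t xhat) := by
    have h1 : IntegrableOn (fun t => Ftil t - F t xhat) (Iio m) := by
      have := integrableOn_cdf_left_tail ftil hfc.measurable hf0 hfi hfmom m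
      refine (this.congr_fun (fun t ht => ?_) measurableSet_Iio)
      have : F t xhat = 0 := by
        rw [hF]
        refine Finset.sum_eq_zero fun j _ => ?_
        rw [heaviside_of_neg (by have := hmle j; simp only [mem_Iio] at ht; linarith), mul_zero]
      rw [this, sub_zero, hFtil]
    have h2 : IntegrableOn (fun t => Ftil t - F t xhat) (Icc m Mx) := by
      refine Measure.integrableOn_of_bounded (M := 1) (by simp) ?_ (ae_of_all _ fun t => ?_)
      · exact (hFc.measurable.sub hFm).aestronglyMeasurable
      · rw [Real.norm_eq_abs, abs_sub_le_iff]
        constructor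
        · have := hF0 t; have := hF1 t; have := hFb0 t xhat; linarith
        · have := hF0 t; have := hFb0 t xhat; have := hFb1 t xhat; linarith
    have h3 : IntegrableOn (fun t => Ftil t - F t xhat) (Ioi Mx) := by
      have h3' : IntegrableOn (fun t => -(∫ s in Ioi t, ftil s)) (Ioi Mx) :=
        (integrableOn_cdf_right_tail ftil hfc.measurable hf0 hfi hfmom Mx).neg
      refine (h3'.congr_fun (fun t ht => ?_) measurableSet_Ioi)
      have hFone : F t xhat = 1 := by
        rw [hF, ← hwsum]
        refine Finset.sum_congr rfl fun j _ => ?_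
        rw [heaviside_of_pos (by have := hMge j; simp only [mem_Ioi] at ht; linarith), mul_one]
      have hsplit : Ftil t + ∫ s in Ioi t, ftil s = 1 := by
        rw [hFtil, ← hfint, ← compl_Iic]
        exact integral_add_compl measurableSet_Iic hfi
      rw [hFone]; linarith
    have : IntegrableOn (fun t => Ftil t - F t xhat) (Iio m ∪ Icc m Mx ∪ Ioi Mx) :=
      (h1.union h2).union h3
    rw [← integrableOn_univ]
    refine this.mono_set fun t _ => ?_
    by_cases hlt : t < m
    · exact Or.inl (Or.inl hlt)
    · by_cases hle : t ≤ Mx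
      · exact Or.inl (Or.inr ⟨not_lt.mp hlt, hle⟩)
      · exact Or.inr (not_le.mp hle)
  have hG2 : Integrable fun t => (Ftil t - F t xhat) ^ 2 := by
    refine hGint.mono ?_ (ae_of_all _ fun t => ?_)
    · exact ((hFc.measurable.sub hFm).pow_const 2).aestronglyMeasurable
    · have hb : |Ftil t - F t xhat| ≤ 1 := by
        rw [abs_sub_le_iff]
        constructor
        · have := hF1 t; have := hFb0 t xhat; linarith
        · have := hFb1 t xhat; have := hF0 t; linarith
      rw [Real.norm_eq_abs, Real.norm_eq_abs, abs_pow]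
      calc |Ftil t - F t xhat| ^ 2 ≤ |Ftil t - F t xhat| * 1 := by
            rw [sq]; exact mul_le_mul_of_nonneg_left hb (abs_nonneg _)
        _ = _ := mul_one _
    -- choose ε isolating xhat i
  have hεex : ∃ ε : ℝ, 0 < ε ∧ ∀ j, j ≠ i → ε ≤ |xhat j - xi| := by
    by_cases hTne : (Finset.univ.erase i).Nonempty
    · refine ⟨(Finset.univ.erase i).inf' hTne (fun j => |xhat j - xi|), ?_, ?_⟩
      · rw [Finset.lt_inf'_iff]
        intro j hj
        have : xhat j ≠ xi := fun h => (Finset.mem_erase.mp hj).1 (hx.injective h)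
        exact abs_pos.mpr (sub_ne_zero.mpr this)
      · intro j hj
        exact Finset.inf'_le _ (Finset.mem_erase.mpr ⟨hj, Finset.mem_univ j⟩)
    · exact ⟨1, one_pos, fun j hj =>
        (hTne ⟨j, Finset.mem_erase.mpr ⟨hj, Finset.mem_univ j⟩⟩).elim⟩
  obtain ⟨ε, hε, hεj⟩ := hεex
  set S : ℝ := F xi xhat + w i / 2 with hS
  set ρ : ℝ → ℝ := fun t => 2 * w i * (Ftil t - S) with hρ
  have hρc : Continuous ρ := continuous_const.mul (hFc.sub continuous_const)
  have hHj : ∀ (j : Fin L), j ≠ i → ∀ t ∈ Ioo (xi - ε) (xi + ε),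
      heaviside (t - xhat j) = heaviside (xi - xhat j) := by
    intro j hj t ht
    obtain ⟨ht1, ht2⟩ := ht
    rcases le_abs.mp (hεj j hj) with h | h
    · rw [heaviside_of_neg (by linarith), heaviside_of_neg (by linarith)]
    · rw [heaviside_of_pos (by linarith), heaviside_of_pos (by linarith)]
  have hFval : ∀ t ∈ Ioo (xi - ε) (xi + ε),
      F t xhat = S - w i + w i * heaviside (t - xi) := by
    intro t ht
    have hFxi : F xi xhat = (∑ j ∈ Finset.univ.erase i, w j * heaviside (xi - xhat j))
        + w i * heaviside (xi - xi) := by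
      rw [hF, ← Finset.sum_erase_add _ _ (Finset.mem_univ i)]
    rw [hF, ← Finset.sum_erase_add _ _ (Finset.mem_univ i),
      Finset.sum_congr rfl (fun j hj => by
        rw [hHj j (Finset.mem_erase.mp hj).1 t ht]), hS, hFxi, sub_self, heaviside_zero]
    ring
  have hFup : ∀ (y t : ℝ), F t (Function.update xhat i y)
      = F t xhat + w i * (heaviside (t - y) - heaviside (t - xi)) := by
    intro y t
    rw [hF, hF, ← Finset.sum_erase_add _ _ (Finset.mem_univ i),
      ← Finset.sum_erase_add _ _ (Finset.mem_univ i)]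
    have h1 : ∀ j ∈ Finset.univ.erase i, w j * heaviside (t - Function.update xhat i y j)
        = w j * heaviside (t - xhat j) := by
      intro j hj
      rw [Function.update_of_ne (Finset.mem_erase.mp hj).1]
    rw [Finset.sum_congr rfl h1, Function.update_self]
    ring
  have hkey : ∀ y ∈ Ioo (xi - ε) (xi + ε),
      D (Function.update xhat i y)
        = D xhat + (∫ t in xi..y, ρ t) + w i ^ 2 * (y - xi) := by
    intro y hy
    obtain ⟨hy1, hy2⟩ := hy
    set d : ℝ → ℝ := fun t => heaviside (t - xi) - heaviside (t - y) with hd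
    set δ : ℝ → ℝ := fun t => w i * d t * (2 * (Ftil t - F t xhat) + w i * d t) with hδ
    have hident : (fun t => (Ftil t - F t (Function.update xhat i y)) ^ 2)
        = fun t => (Ftil t - F t xhat) ^ 2 + δ t := by
      funext t
      rw [hFup y t]; simp only [hδ, hd]; ring
    have hnull : ∀ u : Set ℝ, u ⊆ {y, xi} → volume u = 0 := fun u hu =>
      measure_mono_null hu ((Set.toFinite _).measure_zero volume)
    rcases lt_trichotomy y xi with hlt | heq | hgt
    · -- y < xi
      have hδae : δ =ᵐ[volume] (Ioo y xi).indicator (fun t => -ρ t - w i ^ 2) := by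
        rw [Filter.EventuallyEq, ae_iff]
        refine hnull _ fun t ht => ?_
        simp only [mem_setOf_eq] at ht
        by_contra hc
        simp only [mem_insert_iff, mem_singleton_iff, not_or] at hc
        obtain ⟨hty, htxi⟩ := hc
        apply ht
        rcases lt_trichotomy t y with h | h | h
        · rw [indicator_of_notMem (by simp only [mem_Ioo, not_and_or, not_lt]; left; linarith)]
          simp only [hδ, hd]
          rw [heaviside_of_neg (by linarith), heaviside_of_neg (by linarith)]
          ring
        · exact (hty h).elim
        · rcases lt_trichotomy t xi with h2 | h2 | h2
          · rw [indicator_of_mem (mem_Ioo.mpr ⟨h, h2⟩)]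
            have hFt : F t xhat = S - w i + w i * heaviside (t - xi) :=
              hFval t (mem_Ioo.mpr ⟨by linarith, by linarith⟩)
            simp only [hδ, hd, hρ]
            rw [hFt, heaviside_of_neg (by linarith), heaviside_of_pos (by linarith)]
            ring
          · exact (htxi h2).elim
          · rw [indicator_of_notMem (by simp only [mem_Ioo, not_and_or, not_lt]; right; linarith)]
            simp only [hδ, hd]
            rw [heaviside_of_pos (by linarith), heaviside_of_pos (by linarith)]
            ring
      have hδig : IntegrableOn (fun t => -ρ t - w i ^ 2) (Ioo y xi) :=
        ((hρc.neg.sub continuous_const).integrableOn_Icc).mono_set Ioo_subset_Icc_self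
      have hδint : Integrable δ := by
        rw [integrable_congr hδae, integrable_indicator_iff measurableSet_Ioo]
        exact hδig
      have hδval : (∫ t, δ t) = (∫ t in xi..y, ρ t) + w i ^ 2 * (y - xi) := by
        rw [integral_congr_ae hδae, integral_indicator measurableSet_Ioo]
        have e1 : (∫ t in Ioo y xi, (-ρ t - w i ^ 2))
            = (∫ t in Ioo y xi, -ρ t) - ∫ _t in Ioo y xi, (w i : ℝ) ^ 2 :=
          integral_sub (hρc.neg.integrableOn_Icc.mono_set Ioo_subset_Icc_self)
            (integrableOn_const (by rw [Real.volume_Ioo]; exact ofReal_ne_top))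
        rw [e1, integral_neg, setIntegral_const, Real.volume_real_Ioo_of_le (by linarith), smul_eq_mul, intervalIntegral.integral_symm,
          intervalIntegral.integral_of_le hlt.le, integral_Ioc_eq_integral_Ioo]
        ring
      rw [hD, hD, hident, integral_add hG2 hδint, hδval]
      ring
    · rw [heq, hxi, Function.update_eq_self, intervalIntegral.integral_same]
      ring
    · -- xi < y
      have hδae : δ =ᵐ[volume] (Ioo xi y).indicator (fun t => ρ t + w i ^ 2) := by
        rw [Filter.EventuallyEq, ae_iff]
        refine hnull _ fun t ht => ?_
        simp only [mem_setOf_eq] at ht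
        by_contra hc
        simp only [mem_insert_iff, mem_singleton_iff, not_or] at hc
        obtain ⟨hty, htxi⟩ := hc
        apply ht
        rcases lt_trichotomy t xi with h | h | h
        · rw [indicator_of_notMem (by simp only [mem_Ioo, not_and_or, not_lt]; left; linarith)]
          simp only [hδ, hd]
          rw [heaviside_of_neg (by linarith), heaviside_of_neg (by linarith)]
          ring
        · exact (htxi h).elim
        · rcases lt_trichotomy t y with h2 | h2 | h2
          · rw [indicator_of_mem (mem_Ioo.mpr ⟨h, h2⟩)]
            have hFt : F t xhat = S - w i + w i * heaviside (t - xi) :=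
              hFval t (mem_Ioo.mpr ⟨by linarith, by linarith⟩)
            simp only [hδ, hd, hρ]
            rw [hFt, heaviside_of_pos (by linarith), heaviside_of_neg (by linarith)]
            ring
          · exact (hty h2).elim
          · rw [indicator_of_notMem (by simp only [mem_Ioo, not_and_or, not_lt]; right; linarith)]
            simp only [hδ, hd]
            rw [heaviside_of_pos (by linarith), heaviside_of_pos (by linarith)]
            ring
      have hδig : IntegrableOn (fun t => ρ t + w i ^ 2) (Ioo xi y) :=
        ((hρc.add continuous_const).integrableOn_Icc).mono_set Ioo_subset_Icc_self
      have hδint : Integrable δ := by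
        rw [integrable_congr hδae, integrable_indicator_iff measurableSet_Ioo]
        exact hδig
      have hδval : (∫ t, δ t) = (∫ t in xi..y, ρ t) + w i ^ 2 * (y - xi) := by
        rw [integral_congr_ae hδae, integral_indicator measurableSet_Ioo]
        have e1 : (∫ t in Ioo xi y, (ρ t + w i ^ 2))
            = (∫ t in Ioo xi y, ρ t) + ∫ _t in Ioo xi y, (w i : ℝ) ^ 2 :=
          integral_add (hρc.integrableOn_Icc.mono_set Ioo_subset_Icc_self)
            (integrableOn_const (by rw [Real.volume_Ioo]; exact ofReal_ne_top))
        rw [e1, setIntegral_const, Real.volume_real_Ioo_of_le (by linarith), smul_eq_mul,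
          intervalIntegral.integral_of_le hgt.le, integral_Ioc_eq_integral_Ioo]
        ring
      rw [hD, hD, hident, integral_add hG2 hδint, hδval]
      ring
  have hρxi : ρ xi + w i ^ 2 = 2 * w i * (Ftil xi - F xi xhat) := by
    simp only [hρ, hS]; ring
  have hderiv : HasDerivAt (fun y => D xhat + ((∫ t in xi..y, ρ t) + w i ^ 2 * (y - xi)))
      (2 * w i * (Ftil (xhat i) - F (xhat i) xhat)) xi := by
    rw [← hxi, ← hρxi]
    have h1 : HasDerivAt (fun y => ∫ t in xi..y, ρ t) (ρ xi) xi :=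
      intervalIntegral.integral_hasDerivAt_right (hρc.intervalIntegrable _ _)
        (hρc.stronglyMeasurableAtFilter _ _) hρc.continuousAt
    have h2 : HasDerivAt (fun y => w i ^ 2 * (y - xi)) (w i ^ 2) xi := by
      have := ((hasDerivAt_id xi).sub_const xi).const_mul (w i ^ 2)
      simpa using this
    exact (h1.add h2).const_add (D xhat)
  refine hderiv.congr_of_eventuallyEq ?_
  filter_upwards [Ioo_mem_nhds (by linarith : xi - ε < xi) (by linarith : xi < xi + ε)]
    with y hy
  rw [hkey y hy]
  ring
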